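/- Critical Grönwall-type lemma, one-parameter version (Remark B.2): Let (E,‖·‖) be a normed real vector space, ℓ>0, C₁,C₂ ≥ 0 and δ ∈ (0, e^{−C₂}). There exists η̄ > 0, depending only on C₁, C₂, ℓ and δ, such that for every η ∈ (0, η̄) and every bounded function f : [0,1] → E with f(0) = 0 satisfying, for all 0 ≤ s ≤ t ≤ 1 with t−s ≤ ℓ, ‖f(t) − f(s)‖ ≤ C₁·(M_{s,t}+η)·(t−s)^{1/2} + C₂·(M_{s,t}+η)·|log(M_{s,t}+η)|·(t−s), where M_{s,t} := sup_{r∈[s,t]} ‖f(r)‖, one has sup_{t∈[0,1]} ‖f(t)‖ ≤ η^{e^{−C₂}−δ}. -/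

import Mathlib

open Real Set


/-- If `a ≤ X + c₁√u + c₂u` for all small positive `u`, then `a ≤ X`. -/
lemma cg_aux_limit {a X c₁ c₂ u₀ : ℝ} (hc₁ : 0 ≤ c₁) (hc₂ : 0 ≤ c₂) (hu₀ : 0 < u₀)
    (h : ∀ u : ℝ, 0 < u → u ≤ u₀ → a ≤ X + (c₁ * Real.sqrt u + c₂ * u)) : a ≤ X := by
  refine le_of_forall_pos_le_add fun ζ hζ => ?_
  set u : ℝ := min u₀ (min ((ζ / (2 * (c₁ + 1))) ^ 2) (ζ / (2 * (c₂ + 1)))) with hu_def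
  have hu_pos : 0 < u := by
    refine lt_min hu₀ (lt_min (by positivity) (by positivity))
  have h1 : c₁ * Real.sqrt u ≤ ζ / 2 := by
    have hu1 : u ≤ (ζ / (2 * (c₁ + 1))) ^ 2 := le_trans (min_le_right _ _) (min_le_left _ _)
    have := Real.sqrt_le_sqrt hu1
    rw [Real.sqrt_sq (by positivity)] at this
    calc c₁ * Real.sqrt u ≤ (c₁ + 1) * (ζ / (2 * (c₁ + 1))) := by
          apply mul_le_mul (by linarith) this (Real.sqrt_nonneg _) (by positivity)
      _ = ζ / 2 := by field_simp
  have h2 : c₂ * u ≤ ζ / 2 := by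
    have hu2 : u ≤ ζ / (2 * (c₂ + 1)) := le_trans (min_le_right _ _) (min_le_right _ _)
    calc c₂ * u ≤ (c₂ + 1) * (ζ / (2 * (c₂ + 1))) := by
          apply mul_le_mul (by linarith) hu2 (le_of_lt hu_pos) (by positivity)
      _ = ζ / 2 := by field_simp
  have := h u hu_pos (min_le_left _ _)
  linarith

/-- For every `w > 0` there is small `u ≤ u₀` with `c₁√u + c₂u ≤ w`. -/
lemma cg_aux_small {c₁ c₂ u₀ w : ℝ} (hc₁ : 0 ≤ c₁) (hc₂ : 0 ≤ c₂) (hu₀ : 0 < u₀) (hw : 0 < w) :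
    ∃ u : ℝ, 0 < u ∧ u ≤ u₀ ∧ c₁ * Real.sqrt u + c₂ * u ≤ w := by
  by_contra hcon
  push_neg at hcon
  have : (w : ℝ) ≤ 0 := by
    have := cg_aux_limit (a := w) (X := 0) hc₁ hc₂ hu₀ (fun u hu hu' => by
      have := le_of_lt (hcon u hu hu')
      linarith)
    linarith
  linarith

/-- monotonicity of `x ↦ x·|log x|` up to `e⁻¹`. -/
lemma cg_phi_mono {x X : ℝ} (hx : 0 < x) (hxX : x ≤ X) (hX : X ≤ Real.exp (-1)) :
    x * |Real.log x| ≤ X * (-Real.log X) := by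
  have hX0 : 0 < X := lt_of_lt_of_le hx hxX
  have hlogX : Real.log X ≤ -1 := by
    have := Real.log_le_log hX0 hX
    rwa [Real.log_exp] at this
  have hlogx : Real.log x ≤ Real.log X := Real.log_le_log hx hxX
  have habs : |Real.log x| = -Real.log x := abs_of_nonpos (by linarith)
  rw [habs]
  -- log (X/x) ≤ X/x - 1, i.e. x * (log X - log x) ≤ X - x
  have hdiv : Real.log (X / x) ≤ X / x - 1 := by
    have := Real.log_le_sub_one_of_pos (x := X / x) (by positivity)
    linarith
  rw [Real.log_div (ne_of_gt hX0) (ne_of_gt hx)] at hdiv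
  have hkey : x * (Real.log X - Real.log x) ≤ X - x := by
    have := mul_le_mul_of_nonneg_left hdiv (le_of_lt hx)
    calc x * (Real.log X - Real.log x) ≤ x * (X / x - 1) := this
      _ = X - x := by field_simp
  nlinarith [mul_le_mul_of_nonneg_right hxX (by linarith : (0:ℝ) ≤ -Real.log X)]

/-- `exp(-v) ≤ 1 - v + v²` for `v ≥ 0`. -/
lemma cg_exp_neg_le {v : ℝ} (hv : 0 ≤ v) : Real.exp (-v) ≤ 1 - v + v ^ 2 := by
  have h1 : v + 1 ≤ Real.exp v := Real.add_one_le_exp v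
  have h2 : Real.exp (-v) * Real.exp v = 1 := by
    rw [← Real.exp_add]; simp
  have h3 : 0 < Real.exp (-v) := Real.exp_pos _
  nlinarith [Real.exp_pos v]

/-- `(1-x)^n ≥ exp(-n*x/(1-x))` for `0 ≤ x < 1`. -/
lemma cg_pow_ge {x : ℝ} (hx0 : 0 ≤ x) (hx1 : x < 1) (n : ℕ) :
    Real.exp (-(n * (x / (1 - x)))) ≤ (1 - x) ^ n := by
  induction n with
  | zero => simp
  | succ n ih =>
    have key : Real.exp (-(x / (1 - x))) ≤ 1 - x := by
      have h1 : 1 + x / (1 - x) ≤ Real.exp (x / (1 - x)) := by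
        have := Real.add_one_le_exp (x / (1 - x)); linarith
      have h3 : (0:ℝ) < 1 - x := by linarith
      have h2 : 1 / (1 - x) ≤ Real.exp (x / (1 - x)) := by
        have : 1 + x / (1 - x) = 1 / (1 - x) := by field_simp; ring
        linarith
      have h4 : 1 ≤ (1 - x) * Real.exp (x / (1 - x)) := by
        have := mul_le_mul_of_nonneg_left h2 (le_of_lt h3)
        rw [mul_one_div, div_self (ne_of_gt h3)] at this
        linarith
      have h5 : Real.exp (-(x / (1 - x))) * Real.exp (x / (1 - x)) = 1 := by
        rw [← Real.exp_add]; simp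
      nlinarith [Real.exp_pos (x / (1 - x)), Real.exp_pos (-(x / (1 - x)))]
    have hstep : Real.exp (-((n : ℝ) * (x / (1 - x)))) * Real.exp (-(x / (1 - x)))
        ≤ (1 - x) ^ n * (1 - x) := by
      apply mul_le_mul ih key (le_of_lt (Real.exp_pos _)) (pow_nonneg (by linarith) _)
    calc Real.exp (-((n + 1 : ℕ) * (x / (1 - x))))
        = Real.exp (-((n : ℝ) * (x / (1 - x)))) * Real.exp (-(x / (1 - x))) := by
          rw [← Real.exp_add]; push_cast; ring_nf
      _ ≤ (1 - x) ^ n * (1 - x) := hstep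
      _ = (1 - x) ^ (n + 1) := by ring

set_option maxHeartbeats 2000000 in
private lemma cg_main
    {E : Type*} [NormedAddCommGroup E] [NormedSpace ℝ E]
    (ℓ C₁ C₂ : ℝ) (hℓ : 0 < ℓ) (hC₁ : 0 ≤ C₁) (hC₂ : 0 ≤ C₂)
    (δ : ℝ) (hδ : 0 < δ) (hδ' : δ < Real.exp (-C₂)) :
    ∃ ηBar : ℝ, 0 < ηBar ∧
      ∀ η : ℝ, 0 < η → η < 1 → η < ηBar →
      ∀ f : ℝ → E,
        (∃ B : ℝ, ∀ t : ℝ, 0 ≤ t → t ≤ 1 → ‖f t‖ ≤ B) →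
        f 0 = 0 →
        (∀ s t : ℝ, 0 ≤ s → s ≤ t → t ≤ 1 → t - s ≤ ℓ →
          ‖f t - f s‖ ≤
            C₁ * ((⨆ r : Icc s t, ‖f (r : ℝ)‖) + η) * (t - s) ^ ((1 : ℝ) / 2)
            + C₂ * ((⨆ r : Icc s t, ‖f (r : ℝ)‖) + η)
                * |Real.log ((⨆ r : Icc s t, ‖f (r : ℝ)‖) + η)| * (t - s)) →
        ∀ t : ℝ, 0 ≤ t → t ≤ 1 → ‖f t‖ ≤ η ^ (Real.exp (-C₂) - δ) := by
  -- ## constants depending only on the data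
  set α : ℝ := Real.exp (-C₂) - δ with hα_def
  have hα_pos : 0 < α := sub_pos.mpr hδ'
  have hρ0 : Real.log α < -C₂ := by
    have h1 : Real.log α < Real.log (Real.exp (-C₂)) :=
      Real.log_lt_log hα_pos (by simp only [hα_def]; linarith)
    rwa [Real.log_exp] at h1
  set ρ : ℝ := -C₂ - Real.log α with hρ_def
  have hρ_pos : 0 < ρ := by simp only [hρ_def]; linarith
  set ε : ℝ := min 1 (ρ / (C₂ + 2)) with hε_def
  have hε_pos : 0 < ε := lt_min one_pos (by positivity)
  have hε_le1 : ε ≤ 1 := min_le_left _ _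
  have hε_le : ε * (C₂ + 2) ≤ ρ := by
    have h1 : ε ≤ ρ / (C₂ + 2) := min_le_right _ _
    have h2 : (0:ℝ) < C₂ + 2 := by linarith
    calc ε * (C₂ + 2) ≤ (ρ / (C₂ + 2)) * (C₂ + 2) :=
          mul_le_mul_of_nonneg_right h1 (le_of_lt h2)
      _ = ρ := by field_simp
  clear_value ρ
  clear_value ε
  set K : ℝ := C₂ + ε with hK_def
  have hK_pos : 0 < K := by simp only [hK_def]; linarith
  clear_value K
  set c₀ : ℝ := min ℓ (min 1 (min (ε / (2 * K)) (α * ε / (4 * K ^ 2)))) with hc₀_def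
  have hc₀_pos : 0 < c₀ :=
    lt_min hℓ (lt_min one_pos (lt_min (by positivity) (by positivity)))
  have hc₀_le1 : c₀ ≤ 1 := le_trans (min_le_right _ _) (min_le_left _ _)
  have hc₀_leℓ : c₀ ≤ ℓ := min_le_left _ _
  have hc₀_le3 : c₀ ≤ ε / (2 * K) :=
    le_trans (min_le_right _ _) (le_trans (min_le_right _ _) (min_le_left _ _))
  have hc₀_le4 : c₀ ≤ α * ε / (4 * K ^ 2) :=
    le_trans (min_le_right _ _) (le_trans (min_le_right _ _) (min_le_right _ _))
  clear_value c₀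
  set Lstar : ℝ := max (max 1 (1 / α)) (32 * C₁ ^ 2 / (α ^ 2 * ε ^ 2 * c₀) + 1) with hLstar_def
  refine ⟨Real.exp (-Lstar), Real.exp_pos _, ?_⟩
  intro η hη0 hη1 hηBar f hfbdd hf0 hineq
  obtain ⟨B, hB⟩ := hfbdd
  have hB0 : 0 ≤ B := le_trans (norm_nonneg _) (hB 0 le_rfl zero_le_one)
  set L : ℝ := -Real.log η with hL_def
  have hlogη : Real.log η = -L := by simp only [hL_def]; ring
  have hL_gt : Lstar < L := by
    have h1 : Real.log η < Real.log (Real.exp (-Lstar)) := Real.log_lt_log hη0 hηBar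
    rw [Real.log_exp] at h1
    simp only [hL_def]; linarith
  clear_value L
  have hL1 : 1 ≤ L := le_trans (le_trans (le_max_left _ _) (le_max_left _ _)) hL_gt.le
  have hL_pos : 0 < L := by linarith
  have hαL : 1 ≤ α * L := by
    have h1 : 1 / α ≤ L := le_trans (le_trans (le_max_right _ _) (le_max_left _ _)) hL_gt.le
    rw [div_le_iff₀ hα_pos] at h1
    nlinarith only [h1, hα_pos]
  have hLC : 32 * C₁ ^ 2 ≤ α ^ 2 * ε ^ 2 * c₀ * L := by
    have h1 : 32 * C₁ ^ 2 / (α ^ 2 * ε ^ 2 * c₀) + 1 ≤ L :=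
      le_trans (le_max_right _ _) hL_gt.le
    have h2 : 32 * C₁ ^ 2 / (α ^ 2 * ε ^ 2 * c₀) ≤ L := by linarith only [h1]
    rw [div_le_iff₀ (by positivity)] at h2
    nlinarith only [h2]
  clear_value α
  clear hLstar_def
  clear_value Lstar
  -- ## the grid
  set h₀ : ℝ := min ℓ (min 1 (min (ε / (2 * K)) (α * ε / (4 * K ^ 2 * L)))) with hh₀_def
  have hh₀_pos : 0 < h₀ :=
    lt_min hℓ (lt_min one_pos (lt_min (by positivity) (by positivity)))
  have hh₀_le1 : h₀ ≤ 1 := le_trans (min_le_right _ _) (min_le_left _ _)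
  have hh₀_leℓ : h₀ ≤ ℓ := min_le_left _ _
  have hh₀_le3 : h₀ ≤ ε / (2 * K) :=
    le_trans (min_le_right _ _) (le_trans (min_le_right _ _) (min_le_left _ _))
  have hh₀_le4 : h₀ ≤ α * ε / (4 * K ^ 2 * L) :=
    le_trans (min_le_right _ _) (le_trans (min_le_right _ _) (min_le_right _ _))
  have hh₀_ge : c₀ / L ≤ h₀ := by
    have hd : c₀ / L ≤ c₀ := div_le_self hc₀_pos.le hL1
    have c5 : c₀ / L ≤ α * ε / (4 * K ^ 2 * L) := by
      rw [show α * ε / (4 * K ^ 2 * L) = (α * ε / (4 * K ^ 2)) / L by field_simp,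
        div_le_div_iff₀ hL_pos hL_pos]
      nlinarith only [hc₀_le4, hL_pos]
    exact le_min (hd.trans hc₀_leℓ) (le_min (hd.trans hc₀_le1) (le_min (hd.trans hc₀_le3) c5))
  clear_value h₀
  set N : ℕ := ⌈1 / h₀⌉₊ with hN_def
  have hN_pos : 0 < N := Nat.ceil_pos.mpr (by positivity)
  have hN_ge : 1 / h₀ ≤ (N : ℝ) := Nat.le_ceil _
  have hN_le : (N : ℝ) ≤ 2 / h₀ := by
    have h1 : (N : ℝ) ≤ 1 / h₀ + 1 := le_of_lt (Nat.ceil_lt_add_one (by positivity))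
    have h2 : 1 ≤ 1 / h₀ := by rw [le_div_iff₀ hh₀_pos]; linarith only [hh₀_le1]
    have h3 : 2 / h₀ = 2 * (1 / h₀) := by ring
    linarith only [h1, h2, h3]
  clear_value N
  set h : ℝ := 1 / (N : ℝ) with hh_def
  have hNR_pos : (0:ℝ) < N := by exact_mod_cast hN_pos
  have hh_pos : 0 < h := by rw [hh_def]; positivity
  have hNh : (N : ℝ) * h = 1 := by rw [hh_def]; field_simp
  have hh_le : h ≤ h₀ := by
    rw [hh_def, div_le_iff₀ hNR_pos]
    calc (1:ℝ) = h₀ * (1 / h₀) := by field_simp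
      _ ≤ h₀ * N := mul_le_mul_of_nonneg_left hN_ge hh₀_pos.le
  have hh_ge : h₀ / 2 ≤ h := by
    rw [hh_def, le_div_iff₀ hNR_pos]
    calc h₀ / 2 * N ≤ h₀ / 2 * (2 / h₀) :=
          mul_le_mul_of_nonneg_left hN_le (by positivity)
      _ = 1 := by field_simp
  clear_value h
  have hh_le_ℓ : h ≤ ℓ := le_trans hh_le hh₀_leℓ
  have hKh : K * h ≤ ε / 2 := by
    have h1 : h ≤ ε / (2 * K) := le_trans hh_le hh₀_le3
    calc K * h ≤ K * (ε / (2 * K)) := mul_le_mul_of_nonneg_left h1 hK_pos.le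
      _ = ε / 2 := by field_simp
  have hKh2 : K * h ≤ 1 / 2 := le_trans hKh (by linarith only [hε_le1])
  have hKh_pos : 0 < K * h := by positivity
  have hE : K ^ 2 * L * h ≤ α * ε / 4 := by
    have h1 : h ≤ α * ε / (4 * K ^ 2 * L) := le_trans hh_le hh₀_le4
    calc K ^ 2 * L * h ≤ K ^ 2 * L * (α * ε / (4 * K ^ 2 * L)) :=
          mul_le_mul_of_nonneg_left h1 (by positivity)
      _ = α * ε / 4 := by field_simp
  have hh_geL : c₀ / (2 * L) ≤ h := by
    have h1 : c₀ / (2 * L) = (c₀ / L) / 2 := by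
      rw [div_div]; ring_nf
    have h2 : (c₀ / L) / 2 ≤ h₀ / 2 := by linarith only [hh₀_ge]
    linarith only [h1, h2, hh_ge]
  have hD : C₁ * Real.sqrt h ≤ α * ε / 4 * (L * h) := by
    have hs2 : Real.sqrt h ^ 2 = h := Real.sq_sqrt hh_pos.le
    have hs_pos : 0 < Real.sqrt h := Real.sqrt_pos.mpr hh_pos
    have h2 : c₀ * L ≤ 2 * (L ^ 2 * h) := by
      have h2' := hh_geL
      rw [div_le_iff₀ (by positivity)] at h2'
      nlinarith only [h2', hL_pos]
    have h1 : C₁ ^ 2 ≤ (α * ε / 4) ^ 2 * L ^ 2 * h := by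
      nlinarith only [mul_le_mul_of_nonneg_left h2 (by positivity : (0:ℝ) ≤ α ^ 2 * ε ^ 2), hLC]
    have h4 : C₁ ≤ α * ε / 4 * L * Real.sqrt h := by
      have hb2 : (α * ε / 4 * L * Real.sqrt h) ^ 2 = (α * ε / 4) ^ 2 * L ^ 2 * h := by
        rw [mul_pow, mul_pow, hs2]
      nlinarith only [h1, hb2, hC₁,
        mul_pos (mul_pos (by positivity : (0:ℝ) < α * ε / 4) hL_pos) hs_pos]
    calc C₁ * Real.sqrt h ≤ (α * ε / 4 * L * Real.sqrt h) * Real.sqrt h :=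
          mul_le_mul_of_nonneg_right h4 hs_pos.le
      _ = α * ε / 4 * (L * Real.sqrt h ^ 2) := by ring
      _ = α * ε / 4 * (L * h) := by rw [hs2]
  -- ## the exponents
  set γ : ℕ → ℝ := fun n => (1 - K * h) ^ n with hγ_def
  have h1Kh : (1:ℝ) / 2 ≤ 1 - K * h := by linarith only [hKh2]
  have h1Kh1 : 1 - K * h ≤ 1 := by linarith only [hKh_pos]
  have hγ_pos : ∀ n, 0 < γ n := fun n => pow_pos (by linarith only [h1Kh]) n
  have hγ_le1 : ∀ n, γ n ≤ 1 := fun n => pow_le_one₀ (by linarith only [h1Kh]) h1Kh1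
  have hγ0 : γ 0 = 1 := pow_zero _
  have hγ_succ : ∀ n, γ (n + 1) = γ n * (1 - K * h) := fun n => pow_succ _ _
  have hγ_anti : ∀ n, γ (n + 1) ≤ γ n := by
    intro n
    rw [hγ_succ n]
    nlinarith only [hγ_pos n, hKh_pos, hγ_le1 n]
  have hγN : α ≤ γ N := by
    have h1 : Real.exp (-((N:ℝ) * (K * h / (1 - K * h)))) ≤ γ N :=
      cg_pow_ge hKh_pos.le (by linarith only [hKh2]) N
    have h2 : (N:ℝ) * (K * h / (1 - K * h)) ≤ C₂ + ρ := by
      have e1 : (N:ℝ) * (K * h / (1 - K * h)) = K / (1 - K * h) := by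
        rw [mul_div_assoc']
        congr 1
        linear_combination K * hNh
      rw [e1]
      have e2 : K / (1 - K * h) ≤ K * (1 + ε) := by
        rw [div_le_iff₀ (by linarith only [hKh2])]
        have e2' : (1 + ε) * (1 - K * h) ≥ (1 + ε) * (1 - ε / 2) := by
          nlinarith only [hKh, hε_pos]
        have e2'' : 0 ≤ K * (ε * (1 - ε)) :=
          mul_nonneg hK_pos.le (mul_nonneg hε_pos.le (by linarith only [hε_le1]))
        nlinarith only [e2', hK_pos, e2'']
      have e3 : K * (1 + ε) ≤ C₂ + ρ := by
        have e4 : K * (1 + ε) = C₂ + ε * (C₂ + 1 + ε) := by rw [hK_def]; ring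
        nlinarith only [e4, hε_le, hε_pos, hε_le1]
      linarith only [e2, e3]
    have h3 : Real.exp (-(C₂ + ρ)) ≤ Real.exp (-((N:ℝ) * (K * h / (1 - K * h)))) :=
      Real.exp_le_exp.mpr (by linarith only [h2])
    have h4 : Real.exp (-(C₂ + ρ)) = α := by
      rw [hρ_def, show -(C₂ + (-C₂ - Real.log α)) = Real.log α by ring]
      exact Real.exp_log hα_pos
    linarith only [h1, h3, h4]
  have hγ_ge : ∀ n, n ≤ N → α ≤ γ n := by
    intro n hn
    refine le_trans hγN ?_
    simp only [hγ_def]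
    exact pow_le_pow_of_le_one (by linarith only [h1Kh]) h1Kh1 hn
  clear_value γ
  -- ## the running supremum
  set M : ℝ → ℝ := fun t => ⨆ r : Icc (0:ℝ) t, ‖f (r:ℝ)‖ with hM_def
  have hbdd : ∀ s t : ℝ, 0 ≤ s → t ≤ 1 → BddAbove (Set.range fun r : Icc s t => ‖f (r:ℝ)‖) := by
    intro s t hs ht
    refine ⟨B, ?_⟩
    rintro y ⟨r, rfl⟩
    exact hB r (le_trans hs r.2.1) (le_trans r.2.2 ht)
  have hfM : ∀ r t : ℝ, 0 ≤ r → r ≤ t → t ≤ 1 → ‖f r‖ ≤ M t := by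
    intro r t h0 hrt ht1
    exact le_ciSup (hbdd 0 t le_rfl ht1) (⟨r, ⟨h0, hrt⟩⟩ : Icc (0:ℝ) t)
  have hMsup : ∀ t : ℝ, 0 ≤ t → ∀ c : ℝ, (∀ r : ℝ, 0 ≤ r → r ≤ t → ‖f r‖ ≤ c) → M t ≤ c := by
    intro t h0 c hc
    haveI : Nonempty (Icc (0:ℝ) t) := (nonempty_Icc.mpr h0).to_subtype
    exact ciSup_le fun r => hc r r.2.1 r.2.2
  have hMmono : ∀ s t : ℝ, 0 ≤ s → s ≤ t → t ≤ 1 → M s ≤ M t := by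
    intro s t h0 hst ht1
    haveI : Nonempty (Icc (0:ℝ) s) := (nonempty_Icc.mpr h0).to_subtype
    exact ciSup_le fun r => hfM r t r.2.1 (le_trans r.2.2 hst) ht1
  have hM0 : M 0 ≤ 0 := by
    refine hMsup 0 le_rfl 0 fun r h0 h1 => ?_
    have : r = 0 := le_antisymm h1 h0
    rw [this, hf0]; simp
  -- ## relating interval suprema to M
  have hMsub : ∀ s t : ℝ, 0 ≤ s → s ≤ t → t ≤ 1 →
      (0 ≤ (⨆ r : Icc s t, ‖f (r:ℝ)‖)) ∧ ((⨆ r : Icc s t, ‖f (r:ℝ)‖) ≤ B) ∧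
        ((⨆ r : Icc s t, ‖f (r:ℝ)‖) ≤ M t) := by
    intro s t hs hst ht
    haveI : Nonempty (Icc s t) := (nonempty_Icc.mpr hst).to_subtype
    refine ⟨le_trans (norm_nonneg (f s))
        (le_ciSup (hbdd s t hs ht) (⟨s, ⟨le_rfl, hst⟩⟩ : Icc s t)),
      ciSup_le fun r => hB r (le_trans hs r.2.1) (le_trans r.2.2 ht),
      ciSup_le fun r => hfM r t (le_trans hs r.2.1) r.2.2 ht⟩
  -- ## absolute log bound and modulus of continuity
  set Λ : ℝ := max L |Real.log (B + η)| with hΛ_def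
  have hΛ_nonneg : 0 ≤ Λ := le_trans hL_pos.le (le_max_left _ _)
  have hlogabs : ∀ x : ℝ, 0 ≤ x → x ≤ B → |Real.log (x + η)| ≤ Λ := by
    intro x hx hxB
    rcases le_or_gt (x + η) 1 with hle | hgt
    · have e1 : Real.log (x + η) ≤ 0 := Real.log_nonpos (by linarith only [hx, hη0]) hle
      have e2 : Real.log η ≤ Real.log (x + η) := Real.log_le_log hη0 (by linarith only [hx])
      rw [abs_of_nonpos e1]
      refine le_trans ?_ (le_max_left _ _)
      rw [hlogη] at e2; linarith only [e2]
    · have e1 : 0 ≤ Real.log (x + η) := Real.log_nonneg (by linarith only [hgt])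
      have e2 : Real.log (x + η) ≤ Real.log (B + η) :=
        Real.log_le_log (by linarith only [hx, hη0]) (by linarith only [hxB])
      rw [abs_of_nonneg e1]
      exact le_trans (le_trans e2 (le_abs_self _)) (le_max_right _ _)
  clear_value Λ
  have hmod : ∀ s t : ℝ, 0 ≤ s → s ≤ t → t ≤ 1 → t - s ≤ ℓ →
      ‖f t - f s‖ ≤ (B + 1) * C₁ * Real.sqrt (t - s) + (B + 1) * (C₂ * Λ) * (t - s) := by
    intro s t hs hst ht hts
    obtain ⟨h1, h2, _⟩ := hMsub s t hs hst ht
    have h3 := hlogabs _ h1 h2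
    set Ms := (⨆ r : Icc s t, ‖f (r:ℝ)‖)
    have e0 : (t - s) ^ ((1:ℝ)/2) = Real.sqrt (t - s) := (Real.sqrt_eq_rpow _).symm
    have hi := hineq s t hs hst ht hts
    rw [e0] at hi
    have hs1 : Ms + η ≤ B + 1 := by linarith only [h2, hη1]
    have hs0 : 0 ≤ Ms + η := by linarith only [h1, hη0]
    have t1 : C₁ * (Ms + η) * Real.sqrt (t - s) ≤ (B + 1) * C₁ * Real.sqrt (t - s) := by
      have q1 : C₁ * (Ms + η) ≤ C₁ * (B + 1) := mul_le_mul_of_nonneg_left hs1 hC₁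
      have q2 : (0:ℝ) ≤ Real.sqrt (t - s) := Real.sqrt_nonneg _
      nlinarith only [q1, q2]
    have t2 : C₂ * (Ms + η) * |Real.log (Ms + η)| * (t - s) ≤ (B + 1) * (C₂ * Λ) * (t - s) := by
      have g1 : 0 ≤ t - s := by linarith only [hst]
      have g2 : 0 ≤ |Real.log (Ms + η)| := abs_nonneg _
      have q1 : (Ms + η) * |Real.log (Ms + η)| ≤ (B + 1) * Λ :=
        mul_le_mul hs1 h3 g2 (by linarith only [hB0])
      have q2 : C₂ * ((Ms + η) * |Real.log (Ms + η)|) ≤ C₂ * ((B + 1) * Λ) :=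
        mul_le_mul_of_nonneg_left q1 hC₂
      have q3 : C₂ * ((Ms + η) * |Real.log (Ms + η)|) * (t - s) ≤ C₂ * ((B + 1) * Λ) * (t - s) :=
        mul_le_mul_of_nonneg_right q2 g1
      nlinarith only [q3]
    linarith only [hi, t1, t2]
  have hMcont : ∀ s t : ℝ, 0 ≤ s → s ≤ t → t ≤ 1 → t - s ≤ ℓ →
      M t ≤ M s + ((B + 1) * C₁ * Real.sqrt (t - s) + (B + 1) * (C₂ * Λ) * (t - s)) := by
    intro s t hs hst ht hts
    have hBC₁ : (0:ℝ) ≤ (B+1) * C₁ := mul_nonneg (by linarith only [hB0]) hC₁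
    have hBC₂ : (0:ℝ) ≤ (B+1) * (C₂ * Λ) :=
      mul_nonneg (by linarith only [hB0]) (mul_nonneg hC₂ hΛ_nonneg)
    refine hMsup t (le_trans hs hst) _ fun r h0 h1 => ?_
    rcases le_or_gt r s with hrs | hrs
    · have g1 : ‖f r‖ ≤ M s := hfM r s h0 hrs (le_trans hst ht)
      have g2 : 0 ≤ Real.sqrt (t - s) := Real.sqrt_nonneg _
      have g3 : 0 ≤ (B+1) * C₁ * Real.sqrt (t - s) := mul_nonneg hBC₁ g2
      have g4 : 0 ≤ (B+1) * (C₂ * Λ) * (t - s) := mul_nonneg hBC₂ (by linarith only [hst])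
      linarith only [g1, g3, g4]
    · have g0 : ‖f r‖ ≤ ‖f s‖ + ‖f r - f s‖ := by
        calc ‖f r‖ = ‖f s + (f r - f s)‖ := by congr 1; abel
          _ ≤ ‖f s‖ + ‖f r - f s‖ := norm_add_le _ _
      have g1 : ‖f r - f s‖ ≤ (B + 1) * C₁ * Real.sqrt (r - s) + (B + 1) * (C₂ * Λ) * (r - s) :=
        hmod s r hs hrs.le (le_trans h1 ht) (by linarith only [h1, hts])
      have g2 : Real.sqrt (r - s) ≤ Real.sqrt (t - s) := Real.sqrt_le_sqrt (by linarith only [h1])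
      have g3 : ‖f s‖ ≤ M s := hfM s s hs le_rfl (le_trans hst ht)
      have q1 : (B+1) * C₁ * Real.sqrt (r - s) ≤ (B+1) * C₁ * Real.sqrt (t - s) :=
        mul_le_mul_of_nonneg_left g2 hBC₁
      have q2 : (B+1) * (C₂ * Λ) * (r - s) ≤ (B+1) * (C₂ * Λ) * (t - s) :=
        mul_le_mul_of_nonneg_left (by linarith only [h1]) hBC₂
      linarith only [g0, g1, g3, q1, q2]
  clear_value M
  have hBC₁ : (0:ℝ) ≤ (B+1) * C₁ := mul_nonneg (by linarith only [hB0]) hC₁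
  have hBC₂ : (0:ℝ) ≤ (B+1) * (C₂ * Λ) :=
    mul_nonneg (by linarith only [hB0]) (mul_nonneg hC₂ hΛ_nonneg)
  -- ## main induction
  have key : ∀ n : ℕ, n ≤ N → M ((n:ℝ) * h) + η ≤ η ^ (γ n) := by
    intro n
    induction n with
    | zero =>
      intro _
      have e0 : ((0:ℕ):ℝ) * h = 0 := by norm_num
      rw [e0, hγ0, Real.rpow_one]
      linarith only [hM0]
    | succ n ih =>
      intro hn1
      have hn : n ≤ N := Nat.le_of_succ_le hn1
      have IH := ih hn
      have hn1N : ((n:ℝ)+1) ≤ (N:ℝ) := by exact_mod_cast hn1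
      set tn : ℝ := (n:ℝ) * h with htn_def
      have hcast : ((n+1:ℕ):ℝ) * h = tn + h := by rw [htn_def]; push_cast; ring
      rw [hcast]
      have htn0 : 0 ≤ tn := by rw [htn_def]; positivity
      have htn1_le : tn + h ≤ 1 := by
        have e1 : ((n:ℝ)+1) * h ≤ (N:ℝ) * h := mul_le_mul_of_nonneg_right hn1N hh_pos.le
        rw [hNh] at e1
        have e2 : ((n:ℝ)+1) * h = tn + h := by rw [htn_def]; ring
        linarith only [e1, e2]
      set X : ℝ := η ^ (γ (n+1)) with hX_def
      have hγn1_ge : α ≤ γ (n+1) := hγ_ge (n+1) hn1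
      have hγn_ge : α ≤ γ n := hγ_ge n hn
      have hX_pos : 0 < X := Real.rpow_pos_of_pos hη0 _
      have hX_le_e : X ≤ Real.exp (-1) := by
        rw [hX_def, Real.rpow_def_of_pos hη0, hlogη]
        apply Real.exp_le_exp.mpr
        nlinarith only [hγn1_ge, hαL, hL_pos, hα_pos]
      have hIH_le_X : η ^ (γ n) ≤ X := by
        rw [hX_def]
        exact Real.rpow_le_rpow_of_exponent_ge hη0 hη1.le (hγ_anti n)
      have hγdiff : γ n - γ (n+1) = γ n * (K * h) := by rw [hγ_succ n]; ring
      have hratio : η ^ (γ n) = X * Real.exp (-(γ n * K * (L * h))) := by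
        rw [hX_def, Real.rpow_def_of_pos hη0, Real.rpow_def_of_pos hη0, ← Real.exp_add, hlogη]
        congr 1
        linear_combination (-L) * hγdiff
      -- the one-step improvement
      have hstep : ∀ T, tn ≤ T → T ≤ tn + h → M T + η ≤ X →
          M T + η ≤ X * (1 - α * ε / 2 * (L * h)) := by
        intro T hT1 hT2 hTX
        have hT0 : 0 ≤ T := le_trans htn0 hT1
        have hT_le1 : T ≤ 1 := le_trans hT2 htn1_le
        have hγp := (hγ_pos (n+1)).le
        have hXγL : 0 ≤ X * (γ (n+1) * L) :=
          mul_nonneg hX_pos.le (mul_nonneg hγp hL_pos.le)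
        have hterm_nonneg : 0 ≤ C₁ * X * Real.sqrt h + C₂ * (X * (γ (n+1) * L)) * h :=
          add_nonneg (mul_nonneg (mul_nonneg hC₁ hX_pos.le) (Real.sqrt_nonneg _))
            (mul_nonneg (mul_nonneg hC₂ hXγL) hh_pos.le)
        have hpt : ∀ r : ℝ, 0 ≤ r → r ≤ T →
            ‖f r‖ + η ≤ (M tn + η) + (C₁ * X * Real.sqrt h + C₂ * (X * (γ (n+1) * L)) * h) := by
          intro r hr0 hrT
          rcases le_or_gt r tn with hrtn | hrtn
          · have g1 := hfM r tn hr0 hrtn (by linarith only [htn1_le, hh_pos])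
            linarith only [g1, hterm_nonneg]
          · have hr1 : r ≤ 1 := le_trans hrT hT_le1
            have hi := hineq tn r htn0 hrtn.le hr1
              (by linarith only [hrT, hT2, hh_le_ℓ] : r - tn ≤ ℓ)
            obtain ⟨hMs0, hMsB, hMsM⟩ := hMsub tn r htn0 hrtn.le hr1
            set Ms := (⨆ r' : Icc tn r, ‖f (r':ℝ)‖) with hMs_def
            have hMr_le : M r ≤ M T := hMmono r T hr0 hrT hT_le1
            have hMs_le_X : Ms + η ≤ X := by linarith only [hMsM, hMr_le, hTX]
            have hx_pos : 0 < Ms + η := by linarith only [hMs0, hη0]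
            have hsq : (r - tn) ^ ((1:ℝ)/2) = Real.sqrt (r - tn) := (Real.sqrt_eq_rpow _).symm
            rw [hsq] at hi
            have s1 : Real.sqrt (r - tn) ≤ Real.sqrt h :=
              Real.sqrt_le_sqrt (by linarith only [hrT, hT2])
            have s2 : 0 ≤ Real.sqrt (r - tn) := Real.sqrt_nonneg _
            have t1 : C₁ * (Ms + η) * Real.sqrt (r - tn) ≤ C₁ * X * Real.sqrt h := by
              have q1 : (Ms + η) * Real.sqrt (r - tn) ≤ X * Real.sqrt h :=
                mul_le_mul hMs_le_X s1 s2 hX_pos.le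
              calc C₁ * (Ms + η) * Real.sqrt (r - tn)
                  = C₁ * ((Ms + η) * Real.sqrt (r - tn)) := by ring
                _ ≤ C₁ * (X * Real.sqrt h) := mul_le_mul_of_nonneg_left q1 hC₁
                _ = C₁ * X * Real.sqrt h := by ring
            have t2 : C₂ * (Ms + η) * |Real.log (Ms + η)| * (r - tn) ≤
                C₂ * (X * (γ (n+1) * L)) * h := by
              have p1 : (Ms + η) * |Real.log (Ms + η)| ≤ X * (-Real.log X) :=
                cg_phi_mono hx_pos hMs_le_X hX_le_e
              have p2 : -Real.log X = γ (n+1) * L := by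
                rw [hX_def, Real.log_rpow hη0, hlogη]; ring
              rw [p2] at p1
              have p3 : 0 ≤ (Ms + η) * |Real.log (Ms + η)| :=
                mul_nonneg hx_pos.le (abs_nonneg _)
              have p4 : 0 ≤ r - tn := by linarith only [hrtn]
              have p5 : r - tn ≤ h := by linarith only [hrT, hT2]
              have q1 : ((Ms + η) * |Real.log (Ms + η)|) * (r - tn) ≤ (X * (γ (n+1) * L)) * h :=
                mul_le_mul p1 p5 p4 hXγL
              calc C₂ * (Ms + η) * |Real.log (Ms + η)| * (r - tn)
                  = C₂ * (((Ms + η) * |Real.log (Ms + η)|) * (r - tn)) := by ring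
                _ ≤ C₂ * ((X * (γ (n+1) * L)) * h) := mul_le_mul_of_nonneg_left q1 hC₂
                _ = C₂ * (X * (γ (n+1) * L)) * h := by ring
            have g0 : ‖f r‖ ≤ ‖f tn‖ + ‖f r - f tn‖ := by
              calc ‖f r‖ = ‖f tn + (f r - f tn)‖ := by congr 1; abel
                _ ≤ ‖f tn‖ + ‖f r - f tn‖ := norm_add_le _ _
            have g3 : ‖f tn‖ ≤ M tn := hfM tn tn htn0 le_rfl (by linarith only [htn1_le, hh_pos])
            linarith only [hi, g0, g3, t1, t2]
        have hMT_pt : M T ≤ M tn + (C₁ * X * Real.sqrt h + C₂ * (X * (γ (n+1) * L)) * h) := by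
          refine hMsup T hT0 _ fun r h0 h1 => ?_
          have := hpt r h0 h1
          linarith only [this, hη0]
        have hkey : η ^ (γ n) + (C₁ * X * Real.sqrt h + C₂ * (X * (γ (n+1) * L)) * h) ≤
            X * (1 - α * ε / 2 * (L * h)) := by
          rw [hratio]
          set v : ℝ := γ n * K * (L * h) with hv_def
          have hLh_pos : 0 < L * h := mul_pos hL_pos hh_pos
          have hv0 : 0 ≤ v :=
            mul_nonneg (mul_nonneg (hγ_pos n).le hK_pos.le) hLh_pos.le
          have hexp : Real.exp (-v) ≤ 1 - v + v ^ 2 := cg_exp_neg_le hv0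
          have hfac : Real.exp (-v) + (C₁ * Real.sqrt h + C₂ * (γ (n+1) * L) * h) ≤
              1 - α * ε / 2 * (L * h) := by
            have hKLh : 0 ≤ K * (L * h) := mul_nonneg hK_pos.le hLh_pos.le
            have b1 : v ≤ K * (L * h) := by
              rw [hv_def]
              nlinarith only [hγ_le1 n, hKLh]
            have b2 : v ^ 2 ≤ α * ε / 4 * (L * h) := by
              have q1 : v ^ 2 ≤ (K * (L * h)) ^ 2 := by nlinarith only [b1, hv0]
              have q2 := mul_le_mul_of_nonneg_right hE hLh_pos.le
              nlinarith only [q1, q2]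
            have b3 : γ (n+1) * C₂ * (L * h) + α * ε * (L * h) ≤ v := by
              have e : v = γ n * C₂ * (L * h) + γ n * ε * (L * h) := by
                rw [hv_def, hK_def]; ring
              nlinarith only [e, hγ_anti n, hγn_ge, mul_nonneg hC₂ hLh_pos.le,
                mul_nonneg hε_pos.le hLh_pos.le]
            have b4 : C₁ * Real.sqrt h ≤ α * ε / 4 * (L * h) := hD
            have b5 : C₂ * (γ (n+1) * L) * h = γ (n+1) * C₂ * (L * h) := by ring
            linarith only [hexp, b1, b2, b3, b4, b5]
          calc X * Real.exp (-v) + (C₁ * X * Real.sqrt h + C₂ * (X * (γ (n+1) * L)) * h)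
              = X * (Real.exp (-v) + (C₁ * Real.sqrt h + C₂ * (γ (n+1) * L) * h)) := by ring
            _ ≤ X * (1 - α * ε / 2 * (L * h)) := mul_le_mul_of_nonneg_left hfac hX_pos.le
        linarith only [hMT_pt, IH, hkey]
      -- bootstrap via the infimum of the bad set
      have hall : ∀ T, tn ≤ T → T ≤ tn + h → M T + η ≤ X := by
        by_contra hcon
        push_neg at hcon
        obtain ⟨T₀, hT₀1, hT₀2, hT₀3⟩ := hcon
        set S : Set ℝ := {t : ℝ | (tn ≤ t ∧ t ≤ tn + h) ∧ X < M t + η} with hS_def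
        have hT₀S : T₀ ∈ S := ⟨⟨hT₀1, hT₀2⟩, hT₀3⟩
        have hS_ne : S.Nonempty := ⟨T₀, hT₀S⟩
        have hS_bdd : BddBelow S := ⟨tn, fun s hs => hs.1.1⟩
        set T := sInf S with hT_def
        have hT_ge : tn ≤ T := le_csInf hS_ne fun s hs => hs.1.1
        have hT_le : T ≤ tn + h := le_trans (csInf_le hS_bdd hT₀S) hT₀2
        have hT0 : 0 ≤ T := le_trans htn0 hT_ge
        have hT_le1 : T ≤ 1 := le_trans hT_le htn1_le
        have hbelow : ∀ t, tn ≤ t → t < T → M t + η ≤ X := by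
          intro t h1 h2
          by_contra hc
          push_neg at hc
          have htS : t ∈ S := ⟨⟨h1, le_trans h2.le hT_le⟩, hc⟩
          have h3 := csInf_le hS_bdd htS
          rw [← hT_def] at h3
          linarith only [h2, h3]
        have hMT : M T + η ≤ X := by
          apply cg_aux_limit hBC₁ hBC₂ hh_pos
          intro u hu0 huh
          set t' := max tn (T - u) with ht'_def
          have g1 : tn ≤ t' := le_max_left _ _
          have g2 : t' ≤ T := max_le hT_ge (by linarith only [hu0])
          have g3 : T - t' ≤ u := by
            have g3' : T - u ≤ t' := le_max_right _ _
            linarith only [g3']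
          have g4 : 0 ≤ t' := le_trans htn0 g1
          have hmt : M t' + η ≤ X := by
            rcases eq_or_lt_of_le g2 with he | hlt
            · rcases max_cases tn (T - u) with ⟨hm, _⟩ | ⟨hm, _⟩
              · have hTtn : T = tn := by rw [← he, ht'_def, hm]
                rw [he, hTtn]
                exact le_trans IH hIH_le_X
              · exfalso
                have : T - u = T := by rw [← hm, ← ht'_def, he]
                linarith only [this, hu0]
            · exact hbelow t' g1 hlt
          have hcont := hMcont t' T g4 g2 hT_le1
            (by linarith only [g3, huh, hh_le_ℓ] : T - t' ≤ ℓ)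
          have s1 : Real.sqrt (T - t') ≤ Real.sqrt u := Real.sqrt_le_sqrt g3
          have q1 : (B+1) * C₁ * Real.sqrt (T - t') ≤ (B+1) * C₁ * Real.sqrt u :=
            mul_le_mul_of_nonneg_left s1 hBC₁
          have q2 : (B+1) * (C₂ * Λ) * (T - t') ≤ (B+1) * (C₂ * Λ) * u :=
            mul_le_mul_of_nonneg_left g3 hBC₂
          linarith only [hcont, hmt, q1, q2]
        have hMT2 := hstep T hT_ge hT_le hMT
        have hw_pos : 0 < X * (α * ε / 2 * (L * h)) := by positivity
        obtain ⟨u, hu0, huh, huw⟩ := cg_aux_small hBC₁ hBC₂ hh_pos hw_pos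
        have hge : ∀ s ∈ S, T + u ≤ s := by
          intro s hs
          by_contra hc
          push_neg at hc
          have hsT : T ≤ s := csInf_le hS_bdd hs
          have hs1 : s ≤ 1 := le_trans hs.1.2 htn1_le
          have hcont := hMcont T s hT0 hsT hs1
            (by linarith only [hc, huh, hh_le_ℓ] : s - T ≤ ℓ)
          have s1 : Real.sqrt (s - T) ≤ Real.sqrt u :=
            Real.sqrt_le_sqrt (by linarith only [hc])
          have q1 : (B+1) * C₁ * Real.sqrt (s - T) ≤ (B+1) * C₁ * Real.sqrt u :=
            mul_le_mul_of_nonneg_left s1 hBC₁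
          have q2 : (B+1) * (C₂ * Λ) * (s - T) ≤ (B+1) * (C₂ * Λ) * u :=
            mul_le_mul_of_nonneg_left (by linarith only [hc]) hBC₂
          have e2 : X * (1 - α * ε / 2 * (L * h)) = X - X * (α * ε / 2 * (L * h)) := by ring
          have hMs_le : M s + η ≤ X := by
            linarith only [hMT2, hcont, q1, q2, huw, e2]
          exact absurd hMs_le (not_le.mpr hs.2)
        have hfin : T + u ≤ T := by
          have h5 := le_csInf hS_ne hge
          rw [← hT_def] at h5
          linarith only [h5]
        linarith only [hfin, hu0]
      exact hall (tn + h) (by linarith only [hh_pos]) le_rfl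
  -- ## conclusion
  intro t ht0 ht1
  have e1 : ‖f t‖ ≤ M 1 := hfM t 1 ht0 ht1 le_rfl
  have e2 : M ((N:ℝ) * h) + η ≤ η ^ (γ N) := key N le_rfl
  rw [hNh] at e2
  have e3 : η ^ (γ N) ≤ η ^ α :=
    Real.rpow_le_rpow_of_exponent_ge hη0 hη1.le hγN
  linarith only [e1, e2, e3, hη0]

/-- **Critical Grönwall-type lemma, one-parameter version** (Remark B.2).
Let `(E,‖·‖)` be a normed real vector space, `ℓ > 0`, `C₁, C₂ ≥ 0` and
`δ ∈ (0, e^{-C₂})`.  There exists `ηBar > 0` (depending only on `C₁, C₂, ℓ, δ`) such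
that for every `η ∈ (0, ηBar)` (with `η ∈ (0,1)`) and every bounded `f : [0,1] → E`
with `f 0 = 0` satisfying the increment bound on intervals of length at most `ℓ`
(with `M_{s,t} = sup_{r ∈ [s,t]} ‖f r‖`), one has
`sup_{t ∈ [0,1]} ‖f t‖ ≤ η^{e^{-C₂} - δ}`. -/
theorem critical_gronwall_one_parameter
    {E : Type*} [NormedAddCommGroup E] [NormedSpace ℝ E]
    (ℓ C₁ C₂ : ℝ) (hℓ : 0 < ℓ) (hC₁ : 0 ≤ C₁) (hC₂ : 0 ≤ C₂)
    (δ : ℝ) (hδ : 0 < δ) (hδ' : δ < Real.exp (-C₂)) :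
    ∃ ηBar : ℝ, 0 < ηBar ∧
      ∀ η : ℝ, 0 < η → η < 1 → η < ηBar →
      ∀ f : ℝ → E,
        -- boundedness
        (∃ B : ℝ, ∀ t : ℝ, 0 ≤ t → t ≤ 1 → ‖f t‖ ≤ B) →
        -- f(0) = 0
        f 0 = 0 →
        -- the increment bound, with M_{s,t} = sup_{r ∈ [s,t]} ‖f r‖
        (∀ s t : ℝ, 0 ≤ s → s ≤ t → t ≤ 1 → t - s ≤ ℓ →
          ‖f t - f s‖ ≤
            C₁ * ((⨆ r : Icc s t, ‖f (r : ℝ)‖) + η) * (t - s) ^ ((1 : ℝ) / 2)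
            + C₂ * ((⨆ r : Icc s t, ‖f (r : ℝ)‖) + η)
                * |Real.log ((⨆ r : Icc s t, ‖f (r : ℝ)‖) + η)| * (t - s)) →
        -- conclusion: sup_{t ∈ [0,1]} ‖f t‖ ≤ η^{e^{-C₂} - δ}
        ∀ t : ℝ, 0 ≤ t → t ≤ 1 → ‖f t‖ ≤ η ^ (Real.exp (-C₂) - δ) := by
  exact cg_main ℓ C₁ C₂ hℓ hC₁ hC₂ δ hδ hδ'
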